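/- Let M ≥ N ≥ 1 be integers and 0 ≤ j ≤ N−1 an integer. Then for every x > 0, (d/dx) [ ( Σ_{k=0}^{j} ( ∏_{i=1}^{k} (2i−1)/(2i+2(M−N)) ) · L_{2k}^{(2(M−N))}(2Mx) ) · x^{M−N+1/2} e^{−Mx} ] = (1/2) · ( ∏_{k=1}^{j} (2k−1)/(2k+2(M−N)) ) · (2j+1) · L_{2j+1}^{(2(M−N))}(2Mx) · x^{M−N−1/2} e^{−Mx}. -/

import Mathlib

open MeasureTheory

/-- The generalized Laguerre polynomial
`L_n^(α)(x) = ∑_{k=0}^{n} (-1)^k (n+α choose n-k) x^k / k!`. -/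
noncomputable def genLaguerre (n α : ℕ) (x : ℝ) : ℝ :=
  ∑ k ∈ Finset.range (n + 1),
    (-1 : ℝ) ^ k * ((n + α).choose (n - k) : ℝ) * x ^ k / (k.factorial : ℝ)

/-- The skew inner product
`⟨f, g⟩₄ = ∫_0^∞ (f(x) g'(x) - f'(x) g(x)) x^(2(M-N)+1) e^(-2Mx) dx`. -/
noncomputable def skewInner (M N : ℕ) (f g : ℝ → ℝ) : ℝ :=
  ∫ x in Set.Ioi (0 : ℝ),
    (f x * deriv g x - deriv f x * g x) * x ^ (2 * (M - N) + 1) *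
      Real.exp (-(2 * (M : ℝ)) * x)

lemma genLaguerre_zero (α : ℕ) (t : ℝ) : genLaguerre 0 α t = 1 := by
  simp [genLaguerre]

lemma genLaguerre_one (α : ℕ) (t : ℝ) : genLaguerre 1 α t = (1 + (α:ℝ)) - t := by
  simp [genLaguerre, Finset.sum_range_succ]
  push_cast
  ring

lemma fact_ne (k : ℕ) : (k.factorial : ℝ) ≠ 0 :=
  Nat.cast_ne_zero.mpr k.factorial_ne_zero

/-- `t * L_n^{(α)}(t)` reindexed so that the summation index equals the exponent. -/
lemma t_mul_genLaguerre (n α : ℕ) (t : ℝ) :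
    t * genLaguerre n α t =
      -∑ j ∈ Finset.range (n+2),
        (-1:ℝ)^j * (j:ℝ) * ((n+α).choose (n+1-j) : ℝ) * t^j / (j.factorial : ℝ) := by
  rw [Finset.sum_range_succ' (fun j => (-1:ℝ)^j * (j:ℝ) * ((n+α).choose (n+1-j) : ℝ) * t^j / (j.factorial : ℝ)) (n+1)]
  simp only [Nat.cast_zero, mul_zero, zero_mul, pow_zero, Nat.factorial_zero, Nat.cast_one,
    zero_div, add_zero, zero_mul, mul_zero, zero_div]
  rw [genLaguerre, Finset.mul_sum, ← Finset.sum_neg_distrib]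
  apply Finset.sum_congr rfl
  intro k hk
  have h1 : (n + 1 - (k+1)) = n - k := by omega
  rw [h1]
  have h2 : ((k+1).factorial : ℝ) = (k+1) * (k.factorial : ℝ) := by
    push_cast [Nat.factorial_succ]; ring
  rw [h2]
  have := fact_ne k
  field_simp
  push_cast
  ring

/-- `(L_{n+1}^{(α)})' = -L_n^{(α+1)}`. -/
lemma hasDerivAt_genLaguerre_succ (n α : ℕ) (t : ℝ) :
    HasDerivAt (fun s => genLaguerre (n+1) α s) (-genLaguerre n (α+1) t) t := by
  have h : ∀ s : ℝ, genLaguerre (n+1) α s =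
      ∑ k ∈ Finset.range (n+2),
        (-1:ℝ)^k * (((n+1+α).choose (n+1-k)) : ℝ) / (k.factorial : ℝ) * s^k := by
    intro s; rw [genLaguerre]; apply Finset.sum_congr rfl; intro k _; ring
  simp only [funext h]
  have hd : HasDerivAt (fun s : ℝ => ∑ k ∈ Finset.range (n+2),
      (-1:ℝ)^k * (((n+1+α).choose (n+1-k)) : ℝ) / (k.factorial : ℝ) * s^k)
      (∑ k ∈ Finset.range (n+2),
        (-1:ℝ)^k * (((n+1+α).choose (n+1-k)) : ℝ) / (k.factorial : ℝ) * ((k:ℝ) * t^(k-1))) t := by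
    apply HasDerivAt.fun_sum
    intro k _
    exact (hasDerivAt_pow k t).const_mul _
  convert hd using 1
  rw [Finset.sum_range_succ' (fun k => (-1:ℝ)^k * (((n+1+α).choose (n+1-k)) : ℝ) / (k.factorial : ℝ) * ((k:ℝ) * t^(k-1)))]
  simp only [Nat.cast_zero, zero_mul, mul_zero, add_zero]
  rw [genLaguerre, ← Finset.sum_neg_distrib]
  apply Finset.sum_congr rfl
  intro k _
  have h1 : (n + 1 - (k+1)) = n - k := by omega
  have h2 : n + 1 + α = n + (α + 1) := by omega
  rw [h1, h2]
  have h3 : ((k+1).factorial : ℝ) = (k+1) * (k.factorial : ℝ) := by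
    push_cast [Nat.factorial_succ]; ring
  have h4 : k + 1 - 1 = k := rfl
  rw [h3, h4]
  have := fact_ne k
  have hk1 : ((k:ℝ)+1) ≠ 0 := by positivity
  push_cast
  field_simp
  ring

/-- nat key identity 1 -/
lemma natkey1 (m α k : ℕ) (hk : k ≤ m) :
    (m+1-k) * ((m+1+α).choose (m+1-k)) = (m+1+α) * ((m+α).choose (m-k)) := by
  obtain ⟨d, rfl⟩ := Nat.le.dest hk
  have h1 : k + d + 1 - k = d + 1 := by omega
  have h2 : k + d - k = d := by omega
  rw [h1, h2]
  have := Nat.add_one_mul_choose_eq (k + d + α) d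
  have e1 : k + d + α + 1 = k + d + 1 + α := by omega
  rw [e1] at this
  ring_nf at this ⊢
  omega

lemma identA (m α : ℕ) (t : ℝ) :
    t * genLaguerre m (α+1) t =
      ((m:ℝ)+1+(α:ℝ)) * genLaguerre m α t - ((m:ℝ)+1) * genLaguerre (m+1) α t := by
  rw [t_mul_genLaguerre, genLaguerre, genLaguerre, Finset.mul_sum, Finset.mul_sum]
  rw [Finset.sum_range_succ
    (f := fun j => (-1:ℝ)^j * (j:ℝ) * (((m+(α+1)).choose (m+1-j)):ℝ) * t^j / (j.factorial:ℝ)) (m+1)]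
  rw [Finset.sum_range_succ
    (f := fun k => ((m:ℝ)+1) * ((-1:ℝ)^k * (((m+1+α).choose (m+1-k)):ℝ) * t^k / (k.factorial:ℝ))) (m+1)]
  have H : ∀ k ∈ Finset.range (m+1),
      (-1:ℝ)^k * (k:ℝ) * (((m+(α+1)).choose (m+1-k)):ℝ) * t^k / (k.factorial:ℝ)
      = ((m:ℝ)+1) * ((-1:ℝ)^k * (((m+1+α).choose (m+1-k)):ℝ) * t^k / (k.factorial:ℝ))
        - ((m:ℝ)+1+(α:ℝ)) * ((-1:ℝ)^k * (((m+α).choose (m-k)):ℝ) * t^k / (k.factorial:ℝ)) := by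
    intro k hk
    rw [Finset.mem_range] at hk
    have hk' : k ≤ m := by omega
    have key := natkey1 m α k hk'
    have e1 : m + (α+1) = m + 1 + α := by omega
    rw [e1]
    have hcast : ((m:ℝ)+1-(k:ℝ)) * (((m+1+α).choose (m+1-k)):ℝ)
        = ((m:ℝ)+1+(α:ℝ)) * (((m+α).choose (m-k)):ℝ) := by
      have := congrArg (Nat.cast (R := ℝ)) key
      push_cast [Nat.cast_sub (by omega : k ≤ m+1)] at this
      convert this using 2 <;> push_cast <;> ring
    linear_combination ((-(-1:ℝ)^k * t^k)/(k.factorial:ℝ)) * hcast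
  rw [Finset.sum_congr rfl H, Finset.sum_sub_distrib]
  simp only [Nat.add_sub_cancel, Nat.sub_self, Nat.choose_zero_right, Nat.cast_one]
  push_cast
  ring

lemma natkey2 (m α k : ℕ) (hk : k ≤ m) :
    (m+2) * ((m+2+α).choose (m+2-k)) + (m+1+α) * ((m+α).choose (m-k))
      = (2*m+3+α) * ((m+1+α).choose (m+1-k)) + k * ((m+1+α).choose (m+2-k)) := by
  obtain ⟨d, rfl⟩ := Nat.le.dest hk
  have e2 : k + d + 2 - k = d + 2 := by omega
  have e1 : k + d + 1 - k = d + 1 := by omega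
  have e0 : k + d - k = d := by omega
  rw [e2, e1, e0]
  have a2 : k + d + 2 + α = (k + d + 1 + α) + 1 := by omega
  rw [a2, Nat.choose_succ_succ (k+d+1+α) (d+1)]
  have h1 := Nat.add_one_mul_choose_eq (k+d+α) d
  have a1 : k + d + α + 1 = k + d + 1 + α := by omega
  rw [a1] at h1
  have h2 := Nat.choose_succ_right_eq (k+d+1+α) (d+1)
  have a0 : k + d + 1 + α - (d + 1) = k + α := by omega
  rw [a0] at h2
  zify at h1 h2 ⊢
  linear_combination h1 + h2

lemma identB (m α : ℕ) (t : ℝ) :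
    ((m:ℝ)+2) * genLaguerre (m+2) α t + t * genLaguerre (m+1) α t
        + ((m:ℝ)+1+(α:ℝ)) * genLaguerre m α t
      = (2*(m:ℝ)+3+(α:ℝ)) * genLaguerre (m+1) α t := by
  rw [t_mul_genLaguerre, genLaguerre, genLaguerre, genLaguerre, Finset.mul_sum,
    Finset.mul_sum, Finset.mul_sum]
  rw [Finset.sum_range_succ
    (f := fun k => ((m:ℝ)+2) * ((-1:ℝ)^k * (((m+2+α).choose (m+2-k)):ℝ) * t^k / (k.factorial:ℝ))) (m+2)]
  rw [Finset.sum_range_succ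
    (f := fun k => ((m:ℝ)+2) * ((-1:ℝ)^k * (((m+2+α).choose (m+2-k)):ℝ) * t^k / (k.factorial:ℝ))) (m+1)]
  rw [Finset.sum_range_succ
    (f := fun j => (-1:ℝ)^j * (j:ℝ) * (((m+1+α).choose (m+2-j)):ℝ) * t^j / (j.factorial:ℝ)) (m+2)]
  rw [Finset.sum_range_succ
    (f := fun j => (-1:ℝ)^j * (j:ℝ) * (((m+1+α).choose (m+2-j)):ℝ) * t^j / (j.factorial:ℝ)) (m+1)]
  rw [Finset.sum_range_succ
    (f := fun k => (2*(m:ℝ)+3+(α:ℝ)) * ((-1:ℝ)^k * (((m+1+α).choose (m+1-k)):ℝ) * t^k / (k.factorial:ℝ))) (m+1)]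
  have H : ∀ k ∈ Finset.range (m+1),
      ((m:ℝ)+2) * ((-1:ℝ)^k * (((m+2+α).choose (m+2-k)):ℝ) * t^k / (k.factorial:ℝ))
      = (2*(m:ℝ)+3+(α:ℝ)) * ((-1:ℝ)^k * (((m+1+α).choose (m+1-k)):ℝ) * t^k / (k.factorial:ℝ))
        + (-1:ℝ)^k * (k:ℝ) * (((m+1+α).choose (m+2-k)):ℝ) * t^k / (k.factorial:ℝ)
        - ((m:ℝ)+1+(α:ℝ)) * ((-1:ℝ)^k * (((m+α).choose (m-k)):ℝ) * t^k / (k.factorial:ℝ)) := by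
    intro k hk
    rw [Finset.mem_range] at hk
    have hk' : k ≤ m := by omega
    have key := natkey2 m α k hk'
    have hcast : ((m:ℝ)+2) * (((m+2+α).choose (m+2-k)):ℝ) + ((m:ℝ)+1+(α:ℝ)) * (((m+α).choose (m-k)):ℝ)
        = (2*(m:ℝ)+3+(α:ℝ)) * (((m+1+α).choose (m+1-k)):ℝ) + (k:ℝ) * (((m+1+α).choose (m+2-k)):ℝ) := by
      have := congrArg (Nat.cast (R := ℝ)) key
      push_cast at this
      convert this using 2 <;> push_cast <;> ring
    linear_combination (((-1:ℝ)^k * t^k)/(k.factorial:ℝ)) * hcast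
  rw [Finset.sum_congr rfl H]
  simp only [Finset.sum_add_distrib, Finset.sum_sub_distrib, Nat.add_sub_cancel, Nat.sub_self,
    Nat.choose_zero_right, Nat.cast_one, Nat.choose_one_right]
  have hsub1 : m + 2 - (m+1) = 1 := by omega
  rw [hsub1]
  simp only [Nat.choose_one_right]
  push_cast
  ring

lemma combo (m α : ℕ) (t : ℝ) :
    t * (-genLaguerre m (α+1) t) + (((α:ℝ)+1)/2 - t/2) * genLaguerre (m+1) α t
      = (((m:ℝ)+2)/2) * genLaguerre (m+2) α t - (((m:ℝ)+1+(α:ℝ))/2) * genLaguerre m α t := by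
  linear_combination (-1:ℝ) * identA m α t - (1/2) * identB m α t

/-- derivative value of `genLaguerre n α` -/
noncomputable def dL (α : ℕ) : ℕ → ℝ → ℝ
  | 0, _ => 0
  | (n+1), t => -genLaguerre n (α+1) t

lemma hasDerivAt_genLaguerre (n α : ℕ) (t : ℝ) :
    HasDerivAt (fun s => genLaguerre n α s) (dL α n t) t := by
  cases n with
  | zero =>
      have : (fun s => genLaguerre 0 α s) = fun _ : ℝ => (1:ℝ) := by
        funext s; exact genLaguerre_zero α s
      rw [this, dL]
      exact hasDerivAt_const t 1
  | succ n => exact hasDerivAt_genLaguerre_succ n α t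

/-- the coefficient products -/
noncomputable def cf (α : ℕ) (k : ℕ) : ℝ :=
  ∏ i ∈ Finset.Icc 1 k, (2*(i:ℝ)-1)/(2*(i:ℝ)+(α:ℝ))

lemma cf_zero (α : ℕ) : cf α 0 = 1 := by simp [cf]

lemma cf_succ (α k : ℕ) : cf α (k+1) = cf α k * (2*((k:ℝ)+1)-1)/(2*((k:ℝ)+1)+(α:ℝ)) := by
  rw [cf, cf, Finset.prod_Icc_succ_top (by omega : 1 ≤ k+1)]
  push_cast
  ring

lemma bracket (α j : ℕ) (t : ℝ) :
    ∑ k ∈ Finset.range (j+1),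
        cf α k * (t * dL α (2*k) t + (((α:ℝ)+1)/2 - t/2) * genLaguerre (2*k) α t)
      = (1/2) * cf α j * (2*(j:ℝ)+1) * genLaguerre (2*j+1) α t := by
  induction j with
  | zero =>
      rw [Finset.sum_range_one]
      have h0 : genLaguerre (2*0+1) α t = (1 + (α:ℝ)) - t := genLaguerre_one α t
      have h1 : genLaguerre (2*0) α t = 1 := genLaguerre_zero α t
      have hd : dL α (2*0) t = 0 := rfl
      rw [h0, h1, hd, cf_zero]
      push_cast
      ring
  | succ j ih =>
      rw [Finset.sum_range_succ, ih]
      have h2 : 2*(j+1) = (2*j+1)+1 := by omega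
      have h3 : dL α (2*(j+1)) t = -genLaguerre (2*j+1) (α+1) t := by rw [h2, dL]
      rw [h3, h2]
      have hc := combo (2*j+1) α t
      have hcf := cf_succ α j
      have hne : 2*((j:ℝ)+1)+(α:ℝ) ≠ 0 := by positivity
      have hcf' : cf α (j+1) * (2*((j:ℝ)+1)+(α:ℝ)) = cf α j * (2*((j:ℝ)+1)-1) := by
        rw [hcf]; field_simp
      have e1 : ((2*j+1 : ℕ) : ℝ) = 2*(j:ℝ)+1 := by push_cast; ring
      have h4 : (2*j+1)+1+1 = 2*(j+1)+1 := by omega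
      rw [h4] at hc
      calc (1/2) * cf α j * (2*(j:ℝ)+1) * genLaguerre (2*j+1) α t
        + cf α (j+1) * (t * (-genLaguerre (2*j+1) (α+1) t)
            + (((α:ℝ)+1)/2 - t/2) * genLaguerre ((2*j+1)+1) α t)
          = (1/2) * cf α j * (2*(j:ℝ)+1) * genLaguerre (2*j+1) α t
            + cf α (j+1) * (((((2*j+1:ℕ):ℝ)+2)/2) * genLaguerre (2*(j+1)+1) α t
              - ((((2*j+1:ℕ):ℝ)+1+(α:ℝ))/2) * genLaguerre (2*j+1) α t) := by rw [hc]
        _ = (1/2) * cf α (j+1) * (2*((j:ℝ)+1)+1) * genLaguerre (2*(j+1)+1) α t := by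
            rw [e1]
            linear_combination (-(1/2) * genLaguerre (2*j+1) α t) * hcf'
      push_cast
      ring

/-- The derivative of the even skew-orthogonal combination `ψ_{2j}` telescopes:
`(d/dx)[ (∑_{k=0}^j (∏_{i=1}^k (2i-1)/(2i+2(M-N))) L_{2k}^{(2(M-N))}(2Mx))
             · x^{M-N+1/2} e^{-Mx} ]
  = (1/2) (∏_{k=1}^j (2k-1)/(2k+2(M-N))) (2j+1) L_{2j+1}^{(2(M-N))}(2Mx)
             · x^{M-N-1/2} e^{-Mx}` for `x > 0`. -/
theorem stmt_13 (M N : ℕ) (hN : 1 ≤ N) (hMN : N ≤ M) (j : ℕ) (hj : j ≤ N - 1)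
    (x : ℝ) (hx : 0 < x) :
    HasDerivAt
      (fun y : ℝ =>
        (∑ k ∈ Finset.range (j + 1),
            (∏ i ∈ Finset.Icc 1 k,
                (2 * (i : ℝ) - 1) / (2 * (i : ℝ) + 2 * ((M : ℝ) - (N : ℝ)))) *
              genLaguerre (2 * k) (2 * (M - N)) (2 * (M : ℝ) * y)) *
          y ^ ((M : ℝ) - (N : ℝ) + 1 / 2) * Real.exp (-(M : ℝ) * y))
      ((1 / 2) *
          (∏ k ∈ Finset.Icc 1 j,
              (2 * (k : ℝ) - 1) / (2 * (k : ℝ) + 2 * ((M : ℝ) - (N : ℝ)))) *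
          (2 * (j : ℝ) + 1) * genLaguerre (2 * j + 1) (2 * (M - N)) (2 * (M : ℝ) * x) *
          x ^ ((M : ℝ) - (N : ℝ) - 1 / 2) * Real.exp (-(M : ℝ) * x)) x := by
  set α := 2 * (M - N) with hαdef
  have hα : ((α : ℕ) : ℝ) = 2 * ((M : ℝ) - (N : ℝ)) := by
    rw [hαdef]; push_cast [Nat.cast_sub hMN]; ring
  have hcf : ∀ k : ℕ,
      (∏ i ∈ Finset.Icc 1 k, (2 * (i : ℝ) - 1) / (2 * (i : ℝ) + 2 * ((M : ℝ) - (N : ℝ))))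
        = cf α k := by
    intro k
    rw [cf]
    exact Finset.prod_congr rfl fun i _ => by rw [hα]
  simp only [hcf]
  set c : ℝ := (M : ℝ) - (N : ℝ) with hc
  set t : ℝ := 2 * (M : ℝ) * x with ht
  have hlin : HasDerivAt (fun y : ℝ => 2 * (M : ℝ) * y) (2 * (M : ℝ)) x := by
    simpa using (hasDerivAt_id x).const_mul (2 * (M : ℝ))
  have hS : HasDerivAt
      (fun y : ℝ => ∑ k ∈ Finset.range (j + 1), cf α k * genLaguerre (2 * k) α (2 * (M : ℝ) * y))
      (∑ k ∈ Finset.range (j + 1), cf α k * (dL α (2 * k) t * (2 * (M : ℝ)))) x := by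
    apply HasDerivAt.fun_sum
    intro k _
    exact ((hasDerivAt_genLaguerre (2 * k) α t).comp x hlin).const_mul (cf α k)
  have hrpow : HasDerivAt (fun y : ℝ => y ^ (c + 1 / 2))
      ((c + 1 / 2) * x ^ (c + 1 / 2 - 1)) x :=
    Real.hasDerivAt_rpow_const (Or.inl hx.ne')
  have hexpL : HasDerivAt (fun y : ℝ => -(M : ℝ) * y) (-(M : ℝ)) x := by
    simpa using (hasDerivAt_id x).const_mul (-(M : ℝ))
  have hexp : HasDerivAt (fun y : ℝ => Real.exp (-(M : ℝ) * y))
      (Real.exp (-(M : ℝ) * x) * -(M : ℝ)) x := hexpL.exp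
  have H := (hS.fun_mul hrpow).fun_mul hexp
  refine H.congr_deriv (Eq.symm ?_)
  -- now an equality of real numbers
  have h2 : x ^ (c + 1 / 2 - 1) = x ^ (c - 1 / 2) := by
    congr 1; ring
  have h1 : x ^ (c + 1 / 2) = x ^ (c - 1 / 2) * x := by
    have e : c + 1 / 2 = (c - 1 / 2) + 1 := by ring
    rw [e, Real.rpow_add_one hx.ne']
  rw [h2, h1]
  set E := Real.exp (-(M : ℝ) * x) with hE
  set S := ∑ k ∈ Finset.range (j + 1), cf α k * genLaguerre (2 * k) α t with hS2
  set S' := ∑ k ∈ Finset.range (j + 1), cf α k * (dL α (2 * k) t * (2 * (M : ℝ))) with hS'2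
  have key : x * S' + (((α : ℝ) + 1) / 2 - t / 2) * S
      = (1 / 2) * cf α j * (2 * (j : ℝ) + 1) * genLaguerre (2 * j + 1) α t := by
    rw [← bracket α j t]
    rw [hS'2, hS2, Finset.mul_sum, Finset.mul_sum, ← Finset.sum_add_distrib]
    apply Finset.sum_congr rfl
    intro k _
    rw [ht]
    ring
  have hαc : ((α : ℝ) + 1) / 2 = c + 1 / 2 := by rw [hα, hc]; ring
  have htx : t / 2 = (M : ℝ) * x := by rw [ht]; ring
  rw [hαc, htx] at key
  linear_combination (-(x ^ (c - 1 / 2) * E)) * key
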